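/- Let G be a strongly connected finite directed graph on n ≥ 2 vertices and let x ≥ 0. For a vertex v, if there exists d ≥ 0 such that (n−1)/(f_d(v) − γ̃_{d+1}(v) + (d+2)·(n − n_d(v))) ≤ x and the denominator is positive, then the closeness c(v) = (n−1)/f(v) satisfies c(v) ≤ x. -/

import Mathlib

open Finset

variable {V : Type*}

/-- `steps r n v w` : there is a walk of length `n` from `v` to `w` along relation `r`. -/
def steps (r : V → V → Prop) : ℕ → V → V → Prop
  | 0, v, w => v = w
  | n+1, v, w => ∃ u, r v u ∧ steps r n u w

/-- `w` is reachable from `v`. -/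
def reach (r : V → V → Prop) (v w : V) : Prop := ∃ n, steps r n v w

/-- shortest-path distance (number of edges). -/
noncomputable def ddist (r : V → V → Prop) (v w : V) : ℕ := sInf {n | steps r n v w}

open scoped Classical in
/-- set of vertices reachable from `v`. -/
noncomputable def Rset (r : V → V → Prop) [Fintype V] (v : V) : Finset V :=
  univ.filter (fun w => reach r v w)

/-- number of vertices reachable from `v`. -/
noncomputable def rnum (r : V → V → Prop) [Fintype V] (v : V) : ℕ := (Rset r v).card

/-- farness of `v`. -/
noncomputable def farn (r : V → V → Prop) [Fintype V] (v : V) : ℕ :=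
  ∑ w ∈ Rset r v, ddist r v w

open scoped Classical in
/-- ball of radius `d` around `v`. -/
noncomputable def ball (r : V → V → Prop) [Fintype V] (v : V) (d : ℕ) : Finset V :=
  univ.filter (fun w => reach r v w ∧ ddist r v w ≤ d)

/-- number of vertices at distance at most `d` from `v`. -/
noncomputable def nball (r : V → V → Prop) [Fintype V] (v : V) (d : ℕ) : ℕ := (ball r v d).card

open scoped Classical in
/-- set of vertices at distance exactly `d` from `v`. -/
noncomputable def sphere (r : V → V → Prop) [Fintype V] (v : V) (d : ℕ) : Finset V :=
  univ.filter (fun w => reach r v w ∧ ddist r v w = d)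

/-- number of vertices at distance exactly `d` from `v`. -/
noncomputable def gam (r : V → V → Prop) [Fintype V] (v : V) (d : ℕ) : ℕ := (sphere r v d).card

/-- farness of `v` restricted to distance at most `d`. -/
noncomputable def fd (r : V → V → Prop) [Fintype V] (v : V) (d : ℕ) : ℕ :=
  ∑ w ∈ ball r v d, ddist r v w

open scoped Classical in
/-- out-degree of `u`. -/
noncomputable def outdeg (r : V → V → Prop) [Fintype V] (u : V) : ℕ :=
  (univ.filter (fun w => r u w)).card

/-- `gtil r v d` = upper bound γ̃_{d+1}(v) = Σ_{u : dist(v,u)=d} outdeg(u). -/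
noncomputable def gtil (r : V → V → Prop) [Fintype V] (v : V) (d : ℕ) : ℕ :=
  ∑ u ∈ sphere r v d, outdeg r u

open scoped Classical

lemma steps_snoc {r : V → V → Prop} :
    ∀ {n : ℕ} {v w : V}, steps r (n + 1) v w ↔ ∃ u, steps r n v u ∧ r u w := by
  intro n
  induction n with
  | zero =>
      intro v w
      constructor
      · rintro ⟨u, hvu, hw⟩
        exact ⟨v, rfl, by cases hw; exact hvu⟩
      · rintro ⟨u, hu, huw⟩
        exact ⟨w, by cases hu; exact huw, rfl⟩
  | succ n ih =>
      intro v w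
      constructor
      · rintro ⟨u, hvu, hst⟩
        obtain ⟨u', h1, h2⟩ := ih.mp hst
        exact ⟨u', ⟨u, hvu, h1⟩, h2⟩
      · rintro ⟨u, ⟨u', hvu', hst⟩, huw⟩
        exact ⟨u', hvu', ih.mpr ⟨u, hst, huw⟩⟩

lemma ddist_steps {r : V → V → Prop} {v w : V} (h : reach r v w) :
    steps r (ddist r v w) v w :=
  Nat.sInf_mem h

lemma ddist_le {r : V → V → Prop} {v w : V} {n : ℕ} (h : steps r n v w) :
    ddist r v w ≤ n :=
  Nat.sInf_le h

/-- Key counting lemma: γ(d+1) ≤ γ̃(d+1). -/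
lemma gam_succ_le_gtil [Fintype V] (r : V → V → Prop) (v : V) (d : ℕ) :
    gam r v (d + 1) ≤ gtil r v d := by
  have hsub : sphere r v (d + 1) ⊆
      (sphere r v d).biUnion (fun u => univ.filter (fun w => r u w)) := by
    intro w hw
    simp only [sphere, mem_filter, mem_univ, true_and] at hw
    obtain ⟨hreach, hdd⟩ := hw
    have hst : steps r (d + 1) v w := by
      have := ddist_steps hreach
      rwa [hdd] at this
    obtain ⟨u, hst', huw⟩ := steps_snoc.mp hst
    have hule : ddist r v u ≤ d := ddist_le hst'
    have hune : ddist r v u = d := by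
      rcases lt_or_eq_of_le hule with hlt | heq
      · exfalso
        have hru : reach r v u := ⟨d, hst'⟩
        have : steps r (ddist r v u + 1) v w :=
          steps_snoc.mpr ⟨u, ddist_steps hru, huw⟩
        have := ddist_le this
        omega
      · exact heq
    refine mem_biUnion.mpr ⟨u, ?_, ?_⟩
    · simp only [sphere, mem_filter, mem_univ, true_and]
      exact ⟨⟨d, hst'⟩, hune⟩
    · simp [huw]
  calc gam r v (d + 1) ≤ ((sphere r v d).biUnion
        (fun u => univ.filter (fun w => r u w))).card := card_le_card hsub
    _ ≤ ∑ u ∈ sphere r v d, (univ.filter (fun w => r u w)).card := card_biUnion_le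
    _ = gtil r v d := rfl

lemma main_ineq [Fintype V] (r : V → V → Prop) (hsc : ∀ v w : V, reach r v w) (v : V)
    (d : ℕ) :
    fd r v d + (d + 2) * (Fintype.card V - nball r v d) ≤ farn r v + gtil r v d := by
  set B := ball r v d with hB
  set A := (univ : Finset V) \ B with hA
  set S := A.filter (fun w => ddist r v w = d + 1) with hS
  set T := A \ S with hT
  -- facts about cards
  have hBsub : B ⊆ univ := subset_univ _
  have hAcard : A.card = Fintype.card V - nball r v d := by
    rw [hA, card_sdiff_of_subset hBsub, card_univ]; rfl
  have hScard : S.card + T.card = A.card := by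
    rw [hT, card_sdiff_of_subset (filter_subset _ _), hS]
    have := card_filter_le A (fun w => ddist r v w = d + 1)
    omega
  have hSsphere : S = sphere r v (d + 1) := by
    ext w
    simp only [hS, hA, sphere, mem_filter, mem_sdiff, mem_univ, true_and, hB, ball]
    constructor
    · rintro ⟨_, h2⟩; exact ⟨hsc v w, h2⟩
    · rintro ⟨h1, h2⟩
      refine ⟨fun hmem => ?_, h2⟩
      have hmem := hmem.2
      omega
  have hSgtil : S.card ≤ gtil r v d := by
    rw [hSsphere]; exact gam_succ_le_gtil r v d
  -- farn splits
  have hRset : Rset r v = univ := by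
    ext w; simp [Rset, hsc v w]
  have hfarn : farn r v = fd r v d + ∑ w ∈ A, ddist r v w := by
    rw [farn, hRset, ← sum_sdiff hBsub]
    rw [fd, ← hB, ← hA]; ring
  -- lower bound on the outside sum
  have hAsum : (d + 1) * S.card + (d + 2) * T.card ≤ ∑ w ∈ A, ddist r v w := by
    rw [← sum_sdiff (filter_subset (fun w => ddist r v w = d + 1) A), ← hS, ← hT]
    have h1 : (d + 1) * S.card ≤ ∑ w ∈ S, ddist r v w := by
      rw [hSsphere]
      calc (d + 1) * (sphere r v (d + 1)).card
          = ∑ _w ∈ sphere r v (d + 1), (d + 1) := by rw [sum_const]; ring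
        _ ≤ _ := sum_le_sum (fun w hw => by
            simp only [sphere, mem_filter] at hw; omega)
    have h2 : (d + 2) * T.card ≤ ∑ w ∈ T, ddist r v w := by
      calc (d + 2) * T.card = ∑ _w ∈ T, (d + 2) := by rw [sum_const]; ring
        _ ≤ _ := sum_le_sum (fun w hw => by
            simp only [hT, hS, hA, hB, mem_sdiff, mem_filter, mem_univ, true_and,
              ball] at hw
            obtain ⟨hnb, hne⟩ := hw
            have : ¬ ddist r v w ≤ d := fun hle => hnb ⟨hsc v w, hle⟩
            omega)
    omega
  -- combine
  have key : (d + 2) * A.card ≤ ∑ w ∈ A, ddist r v w + S.card := by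
    have : (d + 2) * A.card = (d + 1) * S.card + (d + 2) * T.card + S.card := by
      rw [← hScard]; ring
    omega
  rw [hfarn, ← hAcard]
  calc fd r v d + (d + 2) * A.card
      ≤ fd r v d + (∑ w ∈ A, ddist r v w + S.card) := by omega
    _ ≤ fd r v d + ∑ w ∈ A, ddist r v w + gtil r v d := by omega

theorem bfscut_correct [Fintype V] (r : V → V → Prop)
    (hsc : ∀ v w : V, reach r v w) (hn : 2 ≤ Fintype.card V) (x : ℝ) (hx : 0 ≤ x) (v : V)
    (h : ∃ d : ℕ,
      0 < (fd r v d : ℝ) - (gtil r v d : ℝ)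
          + (d + 2) * ((Fintype.card V : ℝ) - (nball r v d : ℝ)) ∧
      ((Fintype.card V : ℝ) - 1) /
          ((fd r v d : ℝ) - (gtil r v d : ℝ)
            + (d + 2) * ((Fintype.card V : ℝ) - (nball r v d : ℝ))) ≤ x) :
    ((Fintype.card V : ℝ) - 1) / (farn r v : ℝ) ≤ x := by
  obtain ⟨d, hpos, hle⟩ := h
  have hmain := main_ineq r hsc v d
  have hnb : nball r v d ≤ Fintype.card V := by
    have := card_le_card (subset_univ (ball r v d))
    simpa [nball, card_univ] using this
  have hmainR : (fd r v d : ℝ) - (gtil r v d : ℝ)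
      + (d + 2) * ((Fintype.card V : ℝ) - (nball r v d : ℝ)) ≤ (farn r v : ℝ) := by
    have := (Nat.cast_le (α := ℝ)).mpr hmain
    push_cast [Nat.cast_sub hnb] at this
    nlinarith [this]
  have hfpos : (0 : ℝ) < (farn r v : ℝ) := lt_of_lt_of_le hpos hmainR
  have hcard : (1 : ℝ) ≤ (Fintype.card V : ℝ) - 1 := by
    have : (2 : ℝ) ≤ (Fintype.card V : ℝ) := by exact_mod_cast hn
    linarith
  calc ((Fintype.card V : ℝ) - 1) / (farn r v : ℝ)
      ≤ ((Fintype.card V : ℝ) - 1) / ((fd r v d : ℝ) - (gtil r v d : ℝ)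
        + (d + 2) * ((Fintype.card V : ℝ) - (nball r v d : ℝ))) := by
        apply div_le_div_of_nonneg_left (by linarith) hpos hmainR
    _ ≤ x := hle
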